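/- Fix n ≥ 3 and regard the n+1 parameters a_{01}, a_{21}, a_{32}, …, a_{n,n−1}, a_{1n} as indeterminates. Let c_0, …, c_{n−1}, d_0, …, d_{n−2} be the coefficients of the n-compartment cycle model. Then the determinant of the (n+1)×(n+1) Jacobian matrix of the map (c_0, c_{n−1}, d_0, d_1, …, d_{n−2}) with respect to the n+1 parameters equals, up to sign, a_{32}a_{43}⋯a_{n,n−1}a_{1n} · ∏_{2 ≤ i < j ≤ n} (a_{i+1,i} − a_{j+1,j}), where a_{n+1,n} denotes a_{1n}. -/

import Mathlib

open MvPolynomial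

/-- Index `i : Fin (m+3)` recast in `Fin (m+2)` as `i - 1`. -/
def subOne' {m : ℕ} (i : Fin (m + 3)) : Fin (m + 2) :=
  ⟨i.val - 1, by have := i.isLt; omega⟩

/-- The cycle compartmental matrix with `n = m + 3` compartments:
`A 0 0 = -a₀₁ - a₂₁`, `A 0 (n-1) = a_{1n}`, subdiagonal `A (i+1) i = a_{i+2,i+1}`,
diagonal `A i i = -a_{i+2,i+1}` for `i ≥ 1`, all other entries `0`.
Here `b k` is `a_{k+3,k+2}` for `k = 0,…,m`, and `b (m+1) = a_{1n}`. -/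
def cycMatrix {R : Type*} [CommRing R] (m : ℕ) (a01 a21 : R) (b : Fin (m + 2) → R) :
    Matrix (Fin (m + 3)) (Fin (m + 3)) R :=
  Matrix.of fun i j =>
    if i = 0 ∧ j = 0 then -a01 - a21
    else if i = 0 ∧ j.val = m + 2 then b (Fin.last (m + 1))
    else if i.val = j.val + 1 then (if j = 0 then a21 else b (subOne' j))
    else if i = j then -(b (subOne' i))
    else 0

/-- Index type for the `n + 1` parameters of the cycle model (`n = m + 3`):
`.inl 0 ↦ a₀₁`, `.inl 1 ↦ a₂₁`, `.inr k ↦ a_{k+3,k+2}` (with `.inr (m+1) ↦ a_{1n}`). -/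
abbrev CycIx (m : ℕ) := Fin 2 ⊕ Fin (m + 2)

/-- The cycle compartmental matrix with the parameters as indeterminates. -/
noncomputable def cycA (m : ℕ) :
    Matrix (Fin (m + 3)) (Fin (m + 3)) (MvPolynomial (CycIx m) ℝ) :=
  cycMatrix m (X (Sum.inl 0)) (X (Sum.inl 1)) (fun k => X (Sum.inr k))

/-- The tuple `(c₀, c_{n-1}, d₀, d₁, …, d_{n-2})` of coefficients of the cycle model:
`.inl 0 ↦ c₀`, `.inl 1 ↦ c_{n-1}`, `.inr k ↦ d_k`, where `c_i` is the coefficient of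
`λ^i` in `det (λI - A)` and `d_i` that in `det (λI - A₁₁)`. -/
noncomputable def cycSelCoeff (m : ℕ) : CycIx m → MvPolynomial (CycIx m) ℝ :=
  Sum.elim
    (fun t : Fin 2 => if t = 0 then (cycA m).charpoly.coeff 0
      else (cycA m).charpoly.coeff (m + 2))
    (fun k => ((cycA m).submatrix Fin.succ Fin.succ).charpoly.coeff k.val)

/-- The `(n+1) × (n+1)` Jacobian matrix of `(c₀, c_{n-1}, d₀, …, d_{n-2})` with respect
to the `n + 1` parameters of the cycle model. -/
noncomputable def cycSelJac (m : ℕ) : Matrix (CycIx m) (CycIx m) (MvPolynomial (CycIx m) ℝ) :=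
  Matrix.of fun s t => MvPolynomial.pderiv t (cycSelCoeff m s)

/-- The polynomial `a₃₂a₄₃⋯a_{n,n-1}a_{1n} · ∏_{2 ≤ i < j ≤ n} (a_{i+1,i} - a_{j+1,j})`
(where `a_{n+1,n}` denotes `a_{1n}`). -/
noncomputable def cycSing (m : ℕ) : MvPolynomial (CycIx m) ℝ :=
  (∏ k : Fin (m + 2), X (Sum.inr k)) *
    ∏ p ∈ Finset.univ.filter (fun p : Fin (m + 2) × Fin (m + 2) => p.1 < p.2),
      (X (Sum.inr p.1) - X (Sum.inr p.2))

open Polynomial Finset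

section General

set_option linter.unusedSectionVars false
variable {σ : Type*} {ι : Type*} [DecidableEq σ] [DecidableEq ι]

-- pderiv of product of X's
theorem pderiv_prodX (s : Finset ι) (g : ι → σ) (v : σ) (h : ∀ l ∈ s, g l ≠ v) :
    pderiv v (∏ l ∈ s, (X (g l) : MvPolynomial σ ℝ)) = 0 := by
  induction s using Finset.induction with
  | empty => simp
  | insert _ _ ha ih =>
    rw [Finset.prod_insert ha, pderiv_mul, ih (fun l hl => h l (Finset.mem_insert_of_mem hl)),
      pderiv_X_of_ne (h _ (Finset.mem_insert_self _ _))]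
    ring

theorem pderiv_prodX_mem (s : Finset ι) (g : ι → σ) {j : ι} (hj : j ∈ s)
    (h : ∀ l ∈ s.erase j, g l ≠ g j) :
    pderiv (g j) (∏ l ∈ s, (X (g l) : MvPolynomial σ ℝ)) = ∏ l ∈ s.erase j, X (g l) := by
  rw [← Finset.insert_erase hj, Finset.prod_insert (Finset.notMem_erase _ _), pderiv_mul,
    pderiv_prodX _ _ _ h, pderiv_X_self]
  simp [Finset.insert_erase hj]

theorem pderiv_coeff_zero (s : Finset ι) (g : ι → σ) (v : σ) (h : ∀ l ∈ s, g l ≠ v) (k : ℕ) :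
    pderiv v ((∏ l ∈ s, (Polynomial.X + Polynomial.C (X (g l)) : (MvPolynomial σ ℝ)[X])).coeff k)
      = 0 := by
  induction s using Finset.induction generalizing k with
  | empty => simp [Polynomial.coeff_one]; split <;> simp
  | insert _ _ ha ih =>
    rename_i a s'
    rw [Finset.prod_insert ha, add_mul, Polynomial.coeff_add, Polynomial.coeff_C_mul, map_add,
      pderiv_mul]
    have hv : ∀ l ∈ s', g l ≠ v := fun l hl => h l (Finset.mem_insert_of_mem hl)
    rw [ih hv, pderiv_X_of_ne (h _ (Finset.mem_insert_self _ _))]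
    cases k with
    | zero => simp
    | succ k' => rw [Polynomial.coeff_X_mul, ih hv k']; ring

theorem pderiv_coeff_mem (s : Finset ι) (g : ι → σ) {j : ι} (hj : j ∈ s)
    (h : ∀ l ∈ s.erase j, g l ≠ g j) (k : ℕ) :
    pderiv (g j) ((∏ l ∈ s, (Polynomial.X + Polynomial.C (X (g l)) : (MvPolynomial σ ℝ)[X])).coeff k)
      = (∏ l ∈ s.erase j, (Polynomial.X + Polynomial.C (X (g l)) : (MvPolynomial σ ℝ)[X])).coeff k := by
  rw [← Finset.insert_erase hj, Finset.prod_insert (Finset.notMem_erase _ _), add_mul,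
    Polynomial.coeff_add, Polynomial.coeff_C_mul, map_add, pderiv_mul, pderiv_X_self,
    Finset.insert_erase hj]
  have h0 : ∀ k', pderiv (g j)
      ((∏ l ∈ s.erase j, (Polynomial.X + Polynomial.C (X (g l)) : (MvPolynomial σ ℝ)[X])).coeff k') = 0 :=
    fun k' => pderiv_coeff_zero _ _ _ h k'
  cases k with
  | zero => simp [h0 0]
  | succ k' => rw [Polynomial.coeff_X_mul, h0, h0]; ring

end General

lemma cycA_sub_apply (m : ℕ) (i j : Fin (m + 2)) :
    (cycA m).submatrix Fin.succ Fin.succ i j =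
      if i = j then -(X (Sum.inr i)) else if i.val = j.val + 1 then X (Sum.inr j) else 0 := by
  have h1 : (i.succ = (0 : Fin (m+3))) = False := by simp [Fin.succ_ne_zero]
  simp only [Matrix.submatrix_apply, cycA, cycMatrix, Matrix.of_apply, h1, false_and, if_false]
  have h2 : (i.succ.val = j.succ.val + 1) ↔ (i.val = j.val + 1) := by simp [Fin.val_succ]
  have h3 : (i.succ = j.succ) ↔ i = j := by simp [Fin.succ_inj]
  have h4 : subOne' j.succ = j := by ext; simp [subOne', Fin.val_succ]
  have h5 : subOne' i.succ = i := by ext; simp [subOne', Fin.val_succ]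
  split_ifs with hij hsub hsub' hne hne' <;>
    simp_all [Fin.succ_ne_zero] <;> omega

lemma cycA_sub_charpoly (m : ℕ) :
    ((cycA m).submatrix Fin.succ Fin.succ).charpoly =
      ∏ k : Fin (m + 2), (Polynomial.X + Polynomial.C (X (Sum.inr k))) := by
  rw [Matrix.charpoly, Matrix.det_of_lowerTriangular _ ?ht]
  · apply Finset.prod_congr rfl
    intro k _
    rw [Matrix.charmatrix_apply_eq, cycA_sub_apply]
    simp
  · intro i j hij
    have hij' : (i : Fin (m+2)) < j := hij
    rw [Matrix.charmatrix_apply_ne _ _ _ (ne_of_lt hij'), cycA_sub_apply]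
    have : ¬ i = j := ne_of_lt hij'
    have : ¬ i.val = j.val + 1 := by omega
    simp_all

lemma cycA_zero_zero (m : ℕ) : cycA m 0 0 = -X (Sum.inl 0) - X (Sum.inl 1) := by
  simp [cycA, cycMatrix]

lemma cycA_zero_last (m : ℕ) : cycA m 0 (Fin.last (m + 2)) = X (Sum.inr (Fin.last (m + 1))) := by
  have h1 : ¬ (True ∧ Fin.last (m+2) = 0) := fun h => Fin.last_pos.ne' h.2
  simp only [cycA, cycMatrix, Matrix.of_apply]
  rw [if_neg h1, if_pos ⟨trivial, by simp⟩]

lemma cycA_zero_mid (m : ℕ) (j : Fin (m + 3)) (h0 : j ≠ 0) (hl : j.val ≠ m + 2) :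
    cycA m 0 j = 0 := by
  have h0' : ¬ ((0:Fin (m+3)) = 0 ∧ j = 0) := by simp [h0]
  have h2 : ¬ ((0:Fin (m+3)).val = j.val + 1) := by simp
  have h3 : ¬ ((0:Fin (m+3)) = j) := fun h => h0 h.symm
  simp [cycA, cycMatrix, h0, hl, h2, h3]

lemma cycA_trace (m : ℕ) :
    Matrix.trace (cycA m) =
      -(X (Sum.inl 0) + X (Sum.inl 1) + ∑ k : Fin (m + 2), X (Sum.inr k)) := by
  rw [Matrix.trace]
  rw [show (∑ i, (cycA m).diag i) = ∑ i : Fin (m+3), cycA m i i from rfl, Fin.sum_univ_succ]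
  have h1 : ∀ i : Fin (m+2), cycA m i.succ i.succ = -(X (Sum.inr i)) := by
    intro i
    have := cycA_sub_apply m i i
    simpa using this
  simp only [h1, cycA_zero_zero, Finset.sum_neg_distrib]
  ring

lemma cycA_minor_zero_det (m : ℕ) :
    ((cycA m).submatrix Fin.succ Fin.succ).det =
      (-1)^(m+2) * ∏ k : Fin (m + 2), X (Sum.inr k) := by
  rw [Matrix.det_of_lowerTriangular _ ?ht]
  · have h : ∀ i : Fin (m+2), (cycA m).submatrix Fin.succ Fin.succ i i = -(X (Sum.inr i)) :=
      fun i => by simpa using cycA_sub_apply m i i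
    rw [Finset.prod_congr rfl (fun i _ => h i)]
    have : ∀ i : Fin (m+2), -(X (Sum.inr i) : MvPolynomial (CycIx m) ℝ) = (-1) * X (Sum.inr i) :=
      fun i => by ring
    rw [Finset.prod_congr rfl (fun i _ => this i), Finset.prod_mul_distrib, Finset.prod_const]
    simp
  · intro i j hij
    have hij' : (i : Fin (m+2)) < j := hij
    rw [cycA_sub_apply]
    have h1 : ¬ i = j := ne_of_lt hij'
    have h2 : ¬ i.val = j.val + 1 := by omega
    simp [h1, h2]

lemma cycA_minor_last_apply (m : ℕ) (i j : Fin (m + 2)) :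
    cycA m i.succ j.castSucc =
      if i = j then (if j = 0 then X (Sum.inl 1) else X (Sum.inr (subOne' j.castSucc)))
      else if i.val + 1 = j.val then -(X (Sum.inr i)) else 0 := by
  have h1 : (i.succ = (0 : Fin (m+3))) = False := by simp [Fin.succ_ne_zero]
  have h2 : (j.castSucc.val = m + 2) = False := by
    simp only [Fin.coe_castSucc, eq_iff_iff, iff_false]; omega
  simp only [cycA, cycMatrix, Matrix.of_apply, h1, false_and, if_false]
  have h3 : (i.succ.val = j.castSucc.val + 1) ↔ i = j := by
    simp [Fin.val_succ, Fin.ext_iff]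
  have h4 : (i.succ = j.castSucc) ↔ (i.val + 1 = j.val) := by
    simp [Fin.ext_iff]
  have h5 : (j.castSucc = 0) ↔ j = 0 := Fin.castSucc_eq_zero_iff
  have h6 : subOne' i.succ = i := by ext; simp [subOne', Fin.val_succ]
  split_ifs with c1 c2 c3 c4 c5 c6 c7 <;> simp_all <;> omega

lemma cycA_minor_last_det (m : ℕ) :
    ((cycA m).submatrix Fin.succ Fin.castSucc).det =
      X (Sum.inl 1) * ∏ i : Fin (m + 1), X (Sum.inr i.castSucc) := by
  rw [Matrix.det_of_upperTriangular ?ht]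
  · rw [Fin.prod_univ_succ]
    have h0 : (cycA m).submatrix Fin.succ Fin.castSucc 0 0 = X (Sum.inl 1) := by
      rw [Matrix.submatrix_apply, cycA_minor_last_apply]; simp
    have hs : ∀ i : Fin (m+1), (cycA m).submatrix Fin.succ Fin.castSucc i.succ i.succ
        = X (Sum.inr i.castSucc) := by
      intro i
      rw [Matrix.submatrix_apply, cycA_minor_last_apply]
      have : (i.succ : Fin (m+2)) ≠ 0 := Fin.succ_ne_zero i
      have h7 : subOne' ((i.succ : Fin (m+2)).castSucc) = i.castSucc := by
        ext; simp [subOne']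
      simp [this, h7]
      ext; simp [subOne']
    rw [h0, Finset.prod_congr rfl (fun i _ => hs i)]
  · intro i j hij
    have hij' : (j : Fin (m+2)) < i := hij
    rw [Matrix.submatrix_apply, cycA_minor_last_apply]
    have h1 : ¬ i = j := ne_of_gt hij'
    have h2 : ¬ i.val + 1 = j.val := by omega
    simp [h1, h2]

lemma cycA_det (m : ℕ) :
    (cycA m).det = (-1)^(m+3) * (X (Sum.inl 0) * ∏ k : Fin (m + 2), X (Sum.inr k)) := by
  rw [Matrix.det_succ_row_zero, Fin.sum_univ_succ, Fin.sum_univ_castSucc]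
  have hmid : ∀ i : Fin (m+1),
      ((-1 : MvPolynomial (CycIx m) ℝ)^((i.castSucc.succ : Fin (m+3)) : ℕ) *
        cycA m 0 i.castSucc.succ *
        ((cycA m).submatrix Fin.succ (i.castSucc.succ).succAbove).det) = 0 := by
    intro i
    rw [cycA_zero_mid m _ (Fin.succ_ne_zero _) (by simp [Fin.val_succ]; omega)]
    ring
  rw [Finset.sum_congr rfl (fun i _ => hmid i), Finset.sum_const_zero, zero_add]
  have hlast : ((Fin.last (m+1)).succ : Fin (m+3)) = Fin.last (m+2) := by
    ext; simp
  rw [hlast]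
  have e0 : (cycA m).submatrix Fin.succ ((0 : Fin (m+3)).succAbove) =
      (cycA m).submatrix Fin.succ Fin.succ := rfl
  have elast : (cycA m).submatrix Fin.succ ((Fin.last (m+2)).succAbove) =
      (cycA m).submatrix Fin.succ Fin.castSucc := by rw [Fin.succAbove_last]
  rw [e0, elast, cycA_minor_zero_det, cycA_minor_last_det, cycA_zero_zero, cycA_zero_last]
  have hprod : (∏ k : Fin (m + 2), (X (Sum.inr k) : MvPolynomial (CycIx m) ℝ)) =
      (∏ i : Fin (m+1), X (Sum.inr i.castSucc)) * X (Sum.inr (Fin.last (m+1))) :=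
    Fin.prod_univ_castSucc _
  rw [hprod]
  simp only [Fin.val_zero, Fin.val_last, pow_zero]
  ring

lemma cycA_charpoly_coeff_zero (m : ℕ) :
    (cycA m).charpoly.coeff 0 = X (Sum.inl 0) * ∏ k : Fin (m + 2), X (Sum.inr k) := by
  have h := Matrix.det_eq_sign_charpoly_coeff (cycA m)
  rw [cycA_det] at h
  have hc : Fintype.card (Fin (m+3)) = m + 3 := Fintype.card_fin _
  rw [hc] at h
  have hne : ((-1 : MvPolynomial (CycIx m) ℝ))^(m+3) ≠ 0 := pow_ne_zero _ (by norm_num)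
  exact (mul_left_cancel₀ hne h).symm

lemma cycA_charpoly_coeff_top (m : ℕ) :
    (cycA m).charpoly.coeff (m + 2) =
      X (Sum.inl 0) + X (Sum.inl 1) + ∑ k : Fin (m + 2), X (Sum.inr k) := by
  have h := Matrix.trace_eq_neg_charpoly_coeff (cycA m)
  rw [cycA_trace] at h
  have hc : Fintype.card (Fin (m+3)) - 1 = m + 2 := by simp
  rw [hc] at h
  have := neg_injective h
  simpa using this.symm

/-- The lower-right block of the Jacobian. -/
noncomputable def B22 (m : ℕ) : Matrix (Fin (m+2)) (Fin (m+2)) (MvPolynomial (CycIx m) ℝ) :=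
  Matrix.of fun k j =>
    (∏ l ∈ Finset.univ.erase j,
      (Polynomial.X + Polynomial.C (X (Sum.inr l)) : (MvPolynomial (CycIx m) ℝ)[X])).coeff k.val

lemma jac_toBlocks₂₁ (m : ℕ) : (cycSelJac m).toBlocks₂₁ = 0 := by
  refine Matrix.ext fun k t => ?_
  show pderiv (Sum.inl t) (cycSelCoeff m (Sum.inr k)) = 0
  have : cycSelCoeff m (Sum.inr k) =
      (∏ l ∈ (Finset.univ : Finset (Fin (m+2))),
        (Polynomial.X + Polynomial.C (X (Sum.inr l)) : (MvPolynomial (CycIx m) ℝ)[X])).coeff k.val := by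
    show ((cycA m).submatrix Fin.succ Fin.succ).charpoly.coeff k.val = _
    rw [cycA_sub_charpoly]
  rw [this]
  exact pderiv_coeff_zero _ _ _ (fun l _ => by simp) _

lemma jac_toBlocks₂₂ (m : ℕ) : (cycSelJac m).toBlocks₂₂ = B22 m := by
  refine Matrix.ext fun k j => ?_
  show pderiv (Sum.inr j) (cycSelCoeff m (Sum.inr k)) = B22 m k j
  have : cycSelCoeff m (Sum.inr k) =
      (∏ l ∈ (Finset.univ : Finset (Fin (m+2))),
        (Polynomial.X + Polynomial.C (X (Sum.inr l)) : (MvPolynomial (CycIx m) ℝ)[X])).coeff k.val := by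
    show ((cycA m).submatrix Fin.succ Fin.succ).charpoly.coeff k.val = _
    rw [cycA_sub_charpoly]
  rw [this]
  have := pderiv_coeff_mem (Finset.univ : Finset (Fin (m+2))) (fun l => (Sum.inr l : CycIx m))
    (Finset.mem_univ j) (fun l hl => by
      simp only [ne_eq, Sum.inr.injEq]
      exact fun h => (Finset.mem_erase.mp hl).1 h) k.val
  exact this

lemma jac_toBlocks₁₁ (m : ℕ) : (cycSelJac m).toBlocks₁₁ =
    !![∏ k : Fin (m+2), X (Sum.inr k), 0; 1, 1] := by
  have hc0 : cycSelCoeff m (Sum.inl 0) = X (Sum.inl 0) * ∏ k : Fin (m+2), X (Sum.inr k) := by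
    simp only [cycSelCoeff, Sum.elim_inl, if_true, eq_self_iff_true]
    rw [cycA_charpoly_coeff_zero]
  have hc1 : cycSelCoeff m (Sum.inl 1) =
      X (Sum.inl 0) + X (Sum.inl 1) + ∑ k : Fin (m+2), X (Sum.inr k) := by
    simp only [cycSelCoeff, Sum.elim_inl, if_neg (by norm_num : ¬ (1 : Fin 2) = 0)]
    rw [cycA_charpoly_coeff_top]
  have hsum : ∀ v : CycIx m, (∀ k : Fin (m+2), v ≠ Sum.inr k) →
      pderiv v (∑ k : Fin (m+2), (X (Sum.inr k) : MvPolynomial (CycIx m) ℝ)) = 0 := by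
    intro v hv
    rw [map_sum]
    exact Finset.sum_eq_zero fun k _ => pderiv_X_of_ne (fun h => hv k h.symm)
  refine Matrix.ext fun s t => ?_
  show pderiv (Sum.inl t) (cycSelCoeff m (Sum.inl s)) = _
  fin_cases s <;> fin_cases t
  · show pderiv (Sum.inl 0) (cycSelCoeff m (Sum.inl 0)) = ∏ k : Fin (m+2), X (Sum.inr k)
    rw [hc0, pderiv_mul, pderiv_X_self, pderiv_prodX _ _ _ (fun l _ => by simp)]
    simp
  · show pderiv (Sum.inl 1) (cycSelCoeff m (Sum.inl 0)) = 0
    rw [hc0, pderiv_mul, pderiv_X_of_ne (by simp : (Sum.inl 0 : CycIx m) ≠ Sum.inl 1),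
      pderiv_prodX _ _ _ (fun l _ => by simp)]
    simp
  · show pderiv (Sum.inl 0) (cycSelCoeff m (Sum.inl 1)) = 1
    rw [hc1, map_add, map_add, pderiv_X_self,
      pderiv_X_of_ne (by simp : (Sum.inl 1 : CycIx m) ≠ Sum.inl 0),
      hsum _ (fun k => by simp)]
    simp
  · show pderiv (Sum.inl 1) (cycSelCoeff m (Sum.inl 1)) = 1
    rw [hc1, map_add, map_add, pderiv_X_self,
      pderiv_X_of_ne (by simp : (Sum.inl 0 : CycIx m) ≠ Sum.inl 1),
      hsum _ (fun k => by simp)]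
    simp

lemma jac_det_eq (m : ℕ) :
    (cycSelJac m).det = (∏ k : Fin (m+2), X (Sum.inr k)) * (B22 m).det := by
  conv_lhs => rw [← Matrix.fromBlocks_toBlocks (cycSelJac m)]
  rw [jac_toBlocks₂₁, jac_toBlocks₁₁, jac_toBlocks₂₂, Matrix.det_fromBlocks_zero₂₁,
    Matrix.det_fin_two_of]
  ring

section PairProds

variable {M : Type*} [CommMonoid M] {n : ℕ}

lemma prod_filter_lt_eq (f : Fin n → Fin n → M) :
    ∏ p ∈ Finset.univ.filter (fun p : Fin n × Fin n => p.1 < p.2), f p.1 p.2 =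
      ∏ i : Fin n, ∏ j ∈ Finset.Ioi i, f i j := by
  rw [Finset.prod_sigma']
  refine Finset.prod_nbij' (i := fun p : Fin n × Fin n => (⟨p.1, p.2⟩ : (_ : Fin n) × Fin n))
    (j := fun p : (_ : Fin n) × Fin n => (p.1, p.2)) ?_ ?_ ?_ ?_ ?_ <;>
    simp [Finset.mem_sigma, Finset.mem_Ioi]

lemma prod_Iio_swap (f : Fin n → Fin n → M) :
    ∏ i : Fin n, ∏ j ∈ Finset.Iio i, f i j = ∏ i : Fin n, ∏ j ∈ Finset.Ioi i, f j i := by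
  rw [Finset.prod_sigma', Finset.prod_sigma']
  refine Finset.prod_nbij' (i := fun p : (_ : Fin n) × Fin n => (⟨p.2, p.1⟩ : (_ : Fin n) × Fin n))
    (j := fun p : (_ : Fin n) × Fin n => (⟨p.2, p.1⟩ : (_ : Fin n) × Fin n)) ?_ ?_ ?_ ?_ ?_ <;>
    simp [Finset.mem_sigma, Finset.mem_Ioi, Finset.mem_Iio]

lemma prod_erase_split (f : Fin n → Fin n → M) :
    ∏ i : Fin n, ∏ l ∈ Finset.univ.erase i, f i l =
      (∏ i : Fin n, ∏ j ∈ Finset.Ioi i, f i j) * ∏ i : Fin n, ∏ j ∈ Finset.Ioi i, f j i := by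
  have h : ∀ i : Fin n, (Finset.univ.erase i) =
      (Finset.Ioi i).disjUnion (Finset.Iio i) (Finset.disjoint_Ioi_Iio i) := by
    intro i
    rw [Finset.Ioi_disjUnion_Iio]
    ext x
    simp [Finset.mem_erase, Finset.mem_compl, eq_comm]
  calc ∏ i : Fin n, ∏ l ∈ Finset.univ.erase i, f i l
      = ∏ i : Fin n, ((∏ j ∈ Finset.Ioi i, f i j) * ∏ j ∈ Finset.Iio i, f i j) := by
        refine Finset.prod_congr rfl fun i _ => ?_
        rw [h i, Finset.prod_disjUnion]
    _ = (∏ i : Fin n, ∏ j ∈ Finset.Ioi i, f i j) * ∏ i : Fin n, ∏ j ∈ Finset.Iio i, f i j :=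
        Finset.prod_mul_distrib
    _ = _ := by rw [prod_Iio_swap]

end PairProds

lemma Q_natDegree (m : ℕ) (j : Fin (m+2)) :
    (∏ l ∈ Finset.univ.erase j,
      (Polynomial.X + Polynomial.C (X (Sum.inr l)) : (MvPolynomial (CycIx m) ℝ)[X])).natDegree
      < m + 2 := by
  refine lt_of_le_of_lt (Polynomial.natDegree_prod_le _ _) ?_
  have h : ∀ l ∈ Finset.univ.erase j,
      (Polynomial.X + Polynomial.C (X (Sum.inr l)) : (MvPolynomial (CycIx m) ℝ)[X]).natDegree = 1 :=
    fun l _ => Polynomial.natDegree_X_add_C _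
  rw [Finset.sum_congr rfl h, Finset.sum_const, smul_eq_mul, mul_one,
    Finset.card_erase_of_mem (Finset.mem_univ _), Finset.card_univ, Fintype.card_fin]
  omega

lemma vdm_mul_B22 (m : ℕ) :
    Matrix.vandermonde (fun i : Fin (m+2) => -(X (Sum.inr i) : MvPolynomial (CycIx m) ℝ)) *
        B22 m =
      Matrix.diagonal (fun i => ∏ l ∈ Finset.univ.erase i,
        (X (Sum.inr l) - X (Sum.inr i) : MvPolynomial (CycIx m) ℝ)) := by
  refine Matrix.ext fun i j => ?_
  rw [Matrix.mul_apply]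
  have key : ∑ k : Fin (m+2),
      Matrix.vandermonde (fun i : Fin (m+2) => -(X (Sum.inr i) : MvPolynomial (CycIx m) ℝ)) i k *
        B22 m k j =
      Polynomial.eval (-(X (Sum.inr i)))
        (∏ l ∈ Finset.univ.erase j,
          (Polynomial.X + Polynomial.C (X (Sum.inr l)) : (MvPolynomial (CycIx m) ℝ)[X])) := by
    rw [Polynomial.eval_eq_sum_range' (Q_natDegree m j), ← Fin.sum_univ_eq_sum_range]
    exact Finset.sum_congr rfl fun k _ => by
      rw [Matrix.vandermonde_apply]
      show _ = _
      rw [mul_comm]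
      rfl
  rw [key, Polynomial.eval_prod]
  simp only [Polynomial.eval_add, Polynomial.eval_X, Polynomial.eval_C]
  by_cases hij : i = j
  · subst hij
    rw [Matrix.diagonal_apply_eq]
    exact Finset.prod_congr rfl fun l _ => by ring
  · rw [Matrix.diagonal_apply_ne _ hij]
    exact Finset.prod_eq_zero (Finset.mem_erase.mpr ⟨hij, Finset.mem_univ _⟩) (by ring)

lemma E_ne_zero (m : ℕ) :
    (∏ i : Fin (m+2), ∏ j ∈ Finset.Ioi i,
      (X (Sum.inr i) - X (Sum.inr j) : MvPolynomial (CycIx m) ℝ)) ≠ 0 := by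
  refine Finset.prod_ne_zero_iff.mpr fun i _ => Finset.prod_ne_zero_iff.mpr fun j hj => ?_
  refine sub_ne_zero.mpr fun h => ?_
  have : (Sum.inr i : CycIx m) = Sum.inr j := MvPolynomial.X_injective h
  have : i = j := Sum.inr_injective this
  exact absurd this (ne_of_lt (Finset.mem_Ioi.mp hj))

lemma B22_det (m : ℕ) :
    (B22 m).det = ∏ i : Fin (m+2), ∏ j ∈ Finset.Ioi i,
      (X (Sum.inr j) - X (Sum.inr i) : MvPolynomial (CycIx m) ℝ) := by
  have hW : (Matrix.vandermonde
      (fun i : Fin (m+2) => -(X (Sum.inr i) : MvPolynomial (CycIx m) ℝ))).det =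
      ∏ i : Fin (m+2), ∏ j ∈ Finset.Ioi i, (X (Sum.inr i) - X (Sum.inr j)) := by
    rw [Matrix.det_vandermonde]
    exact Finset.prod_congr rfl fun i _ => Finset.prod_congr rfl fun j _ => by ring
  have h1 := congrArg Matrix.det (vdm_mul_B22 m)
  rw [Matrix.det_mul, Matrix.det_diagonal, hW,
    prod_erase_split (fun i l => (X (Sum.inr l) - X (Sum.inr i) : MvPolynomial (CycIx m) ℝ))]
    at h1
  refine mul_left_cancel₀ (E_ne_zero m) ?_
  rw [h1]
  ring

theorem cycSelJac_det (m : ℕ) :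
    (cycSelJac m).det = cycSing m ∨ (cycSelJac m).det = -cycSing m := by
  have hfilter : (∏ p ∈ Finset.univ.filter (fun p : Fin (m + 2) × Fin (m + 2) => p.1 < p.2),
      (X (Sum.inr p.1) - X (Sum.inr p.2) : MvPolynomial (CycIx m) ℝ)) =
      ∏ i : Fin (m+2), ∏ j ∈ Finset.Ioi i, (X (Sum.inr i) - X (Sum.inr j)) :=
    prod_filter_lt_eq (fun i j => (X (Sum.inr i) - X (Sum.inr j) : MvPolynomial (CycIx m) ℝ))
  have hsign : (∏ i : Fin (m+2), ∏ j ∈ Finset.Ioi i,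
      (X (Sum.inr j) - X (Sum.inr i) : MvPolynomial (CycIx m) ℝ)) =
      (-1) ^ (∑ i : Fin (m+2), (Finset.Ioi i).card) *
        ∏ i : Fin (m+2), ∏ j ∈ Finset.Ioi i, (X (Sum.inr i) - X (Sum.inr j)) := by
    have h1 : ∀ i : Fin (m+2), (∏ j ∈ Finset.Ioi i,
        (X (Sum.inr j) - X (Sum.inr i) : MvPolynomial (CycIx m) ℝ)) =
        (-1) ^ (Finset.Ioi i).card * ∏ j ∈ Finset.Ioi i, (X (Sum.inr i) - X (Sum.inr j)) := by
      intro i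
      rw [← Finset.prod_const, ← Finset.prod_mul_distrib]
      exact Finset.prod_congr rfl fun j _ => by ring
    rw [Finset.prod_congr rfl fun i _ => h1 i, Finset.prod_mul_distrib,
      Finset.prod_pow_eq_pow_sum]
  rw [jac_det_eq, B22_det, cycSing, hfilter, hsign]
  rcases Nat.even_or_odd (∑ i : Fin (m+2), (Finset.Ioi i).card) with he | ho
  · left; rw [he.neg_one_pow]; ring
  · right; rw [ho.neg_one_pow]; ring
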